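/- Under the hypotheses of the probabilistic representation of Y_1 (irreducible μ on Z^2 with downward second-coordinate jumps at most 1 and generating function P finite near the compact level set D of nonempty interior), the function Y_1(x) = E_{(0,1)}[x^{S_1(τ_1)} ; τ_1 < ∞] = Σ_{k_1∈Z} P_{(0,1)}(S(τ_1)=(k_1,0), τ_1<∞) x^{k_1} has all Laurent coefficients strictly positive, and consequently Y_1 is strictly convex on the segment [x*_P, x**_P]. -/

import Mathlib

/-- `n`-step transition function of the (sub)Markov chain with one-step kernel `p`. -/
noncomputable def iterK {S : Type*} [DecidableEq S] (p : S → S → ℝ) : ℕ → S → S → ℝ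
  | 0 => fun j k => if j = k then 1 else 0
  | n + 1 => fun j k => ∑' l, iterK p n j l * p l k

/-- One-step kernel of the homogeneous random walk on `ℤ²` with jump law `μ`. -/
noncomputable def homK (μ : ℤ × ℤ → ℝ) : ℤ × ℤ → ℤ × ℤ → ℝ := fun j k => μ (k - j)

/-- The homogeneous kernel killed on the horizontal axis `ℤ × {0}`. -/
noncomputable def axisKillK (μ : ℤ × ℤ → ℝ) : ℤ × ℤ → ℤ × ℤ → ℝ :=
  fun j k => if k.2 = 0 then 0 else μ (k - j)

/-- Generating function `∑_k ν(k) x^{k₁} y^{k₂}` of a jump measure on `ℤ²`. -/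
noncomputable def genG (ν : ℤ × ℤ → ℝ) (x y : ℝ) : ℝ :=
  ∑' k : ℤ × ℤ, ν k * x ^ k.1 * y ^ k.2

/-- `P_{(0,1)}(S(τ₁) = (k₁,0), τ₁ < ∞)`: the Laurent coefficients of `Y₁`. -/
noncomputable def hitCoeff (μ : ℤ × ℤ → ℝ) (k₁ : ℤ) : ℝ :=
  ∑' n : ℕ, ∑' l : ℤ × ℤ, iterK (axisKillK μ) n ((0 : ℤ), (1 : ℤ)) l * homK μ l (k₁, 0)


open scoped ENNReal

noncomputable def iterE {S : Type*} [DecidableEq S] (p : S → S → ℝ≥0∞) : ℕ → S → S → ℝ≥0∞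
  | 0 => fun j k => if j = k then 1 else 0
  | n + 1 => fun j k => ∑' l, iterE p n j l * p l k

lemma ofReal_zpow' {x : ℝ} (hx : 0 < x) (k : ℤ) :
    ENNReal.ofReal (x ^ k) = (ENNReal.ofReal x) ^ k := by
  cases k with
  | ofNat n => simp [ENNReal.ofReal_pow hx.le]
  | negSucc n =>
      rw [zpow_negSucc, zpow_negSucc, ENNReal.ofReal_inv_of_pos (pow_pos hx _),
        ENNReal.ofReal_pow hx.le]

lemma toReal_zpow' {x : ℝ} (hx : 0 < x) (k : ℤ) :
    ((ENNReal.ofReal x) ^ k).toReal = x ^ k := by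
  rw [← ofReal_zpow' hx, ENNReal.toReal_ofReal (zpow_nonneg hx.le k)]

lemma iterE_tsum_le {S : Type*} [DecidableEq S] {p : S → S → ℝ≥0∞}
    (hp : ∀ j, ∑' k, p j k ≤ 1) : ∀ n j, ∑' k, iterE p n j k ≤ 1 := by
  intro n
  induction n with
  | zero =>
      intro j
      have h : ∀ k, (if j = k then (1:ℝ≥0∞) else 0) = if k = j then 1 else 0 := by
        intro k; simp [eq_comm]
      simp only [iterE]
      rw [tsum_congr h, tsum_ite_eq]
  | succ n ih =>
      intro j
      simp only [iterE]
      rw [ENNReal.tsum_comm]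
      calc ∑' l, ∑' k, iterE p n j l * p l k
          = ∑' l, iterE p n j l * ∑' k, p l k := by
            exact tsum_congr fun l => ENNReal.tsum_mul_left
        _ ≤ ∑' l, iterE p n j l * 1 := ENNReal.tsum_le_tsum fun l =>
            mul_le_mul_right (hp l) _
        _ ≤ 1 := by simpa using ih j

lemma iterE_le_one {S : Type*} [DecidableEq S] {p : S → S → ℝ≥0∞}
    (hp : ∀ j, ∑' k, p j k ≤ 1) (n : ℕ) (j k : S) : iterE p n j k ≤ 1 :=
  le_trans (ENNReal.le_tsum k) (iterE_tsum_le hp n j)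

lemma iterE_ne_top {S : Type*} [DecidableEq S] {p : S → S → ℝ≥0∞}
    (hp : ∀ j, ∑' k, p j k ≤ 1) (n : ℕ) (j k : S) : iterE p n j k ≠ ⊤ :=
  ne_top_of_le_ne_top ENNReal.one_ne_top (iterE_le_one hp n j k)

lemma iterK_eq_toReal {S : Type*} [DecidableEq S] (p : S → S → ℝ)
    (hp : ∀ j k, 0 ≤ p j k)
    (hsub : ∀ j, ∑' k, ENNReal.ofReal (p j k) ≤ 1) :
    ∀ n j k, iterK p n j k = (iterE (fun j k => ENNReal.ofReal (p j k)) n j k).toReal := by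
  intro n
  induction n with
  | zero => intro j k; simp [iterK, iterE, apply_ite ENNReal.toReal]
  | succ n ih =>
      intro j k
      simp only [iterK, iterE]
      have hterm : ∀ l, iterK p n j l * p l k
          = ((iterE (fun j k => ENNReal.ofReal (p j k)) n j l) * ENNReal.ofReal (p l k)).toReal := by
        intro l
        rw [ih j l, ENNReal.toReal_mul, ENNReal.toReal_ofReal (hp l k)]
      rw [tsum_congr hterm, ← ENNReal.tsum_toReal_eq]
      intro l
      exact ENNReal.mul_ne_top (iterE_ne_top hsub n j l) ENNReal.ofReal_ne_top









noncomputable def muE (μ : ℤ × ℤ → ℝ) : ℤ × ℤ → ℝ≥0∞ := fun m => ENNReal.ofReal (μ m)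

noncomputable def KE (μ : ℤ × ℤ → ℝ) : ℤ × ℤ → ℤ × ℤ → ℝ≥0∞ :=
  fun j k => ENNReal.ofReal (axisKillK μ j k)

noncomputable def hitE (μ : ℤ × ℤ → ℝ) (k₁ : ℤ) : ℝ≥0∞ :=
  ∑' n : ℕ, ∑' l : ℤ × ℤ, iterE (KE μ) n ((0:ℤ),(1:ℤ)) l * muE μ ((k₁, 0) - l)

section Facts
variable {μ : ℤ × ℤ → ℝ} (hnn : ∀ k, 0 ≤ μ k) (hprob : ∑' k : ℤ × ℤ, μ k = 1)

include hprob in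
lemma summable_mu : Summable μ := by
  by_contra h
  rw [tsum_eq_zero_of_not_summable h] at hprob
  norm_num at hprob

include hnn hprob in
lemma muE_tsum_one : ∑' m, muE μ m = 1 := by
  rw [show (muE μ) = fun m => ENNReal.ofReal (μ m) from rfl,
    ← ENNReal.ofReal_tsum_of_nonneg hnn (summable_mu hprob), hprob, ENNReal.ofReal_one]

include hnn hprob in
lemma KE_tsum_le (j : ℤ × ℤ) : ∑' k, KE μ j k ≤ 1 := by
  have h1 : ∀ k, KE μ j k ≤ muE μ (k - j) := by
    intro k
    simp only [KE, axisKillK, muE]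
    split
    · simp
    · exact le_rfl
  calc ∑' k, KE μ j k ≤ ∑' k, muE μ (k - j) := ENNReal.tsum_le_tsum h1
    _ = ∑' m, muE μ m := by
        rw [← (Equiv.addRight j).tsum_eq (fun k => muE μ (k - j))]
        simp
    _ = 1 := muE_tsum_one hnn hprob

include hnn hprob in
lemma iterK_axisKill_eq (n : ℕ) (j k : ℤ × ℤ) :
    iterK (axisKillK μ) n j k = (iterE (KE μ) n j k).toReal := by
  have hp : ∀ j k, 0 ≤ axisKillK μ j k := by
    intro j k; simp only [axisKillK]; split
    · exact le_rfl
    · exact hnn _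
  exact iterK_eq_toReal (axisKillK μ) hp (KE_tsum_le hnn hprob) n j k

include hnn hprob in
lemma hitCoeff_eq_toReal (k₁ : ℤ) (hne : hitE μ k₁ ≠ ⊤) :
    hitCoeff μ k₁ = (hitE μ k₁).toReal := by
  have hinner : ∀ n, ∑' l : ℤ × ℤ, iterK (axisKillK μ) n ((0:ℤ),(1:ℤ)) l * homK μ l (k₁, 0)
      = (∑' l : ℤ × ℤ, iterE (KE μ) n ((0:ℤ),(1:ℤ)) l * muE μ ((k₁,0) - l)).toReal := by
    intro n
    have hterm : ∀ l : ℤ × ℤ, iterK (axisKillK μ) n ((0:ℤ),(1:ℤ)) l * homK μ l (k₁, 0)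
        = ((iterE (KE μ) n ((0:ℤ),(1:ℤ)) l) * muE μ ((k₁,0) - l)).toReal := by
      intro l
      rw [iterK_axisKill_eq hnn hprob, ENNReal.toReal_mul, homK, muE,
        ENNReal.toReal_ofReal (hnn _)]
    rw [tsum_congr hterm, ← ENNReal.tsum_toReal_eq]
    intro l
    exact ENNReal.mul_ne_top (iterE_ne_top (KE_tsum_le hnn hprob) n _ l) ENNReal.ofReal_ne_top
  rw [hitCoeff, tsum_congr hinner, ← ENNReal.tsum_toReal_eq, hitE]
  intro n
  exact ne_top_of_le_ne_top hne (ENNReal.le_tsum n)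

end Facts

section Master
variable {μ : ℤ × ℤ → ℝ} (hnn : ∀ k, 0 ≤ μ k) (hprob : ∑' k : ℤ × ℤ, μ k = 1)

include hnn in
lemma master_bound {x y : ℝ} (hx : 0 < x) (hy : 0 < y) (hg : genG μ x y ≤ 1)
    (hs : Summable fun k : ℤ × ℤ => μ k * x ^ k.1 * y ^ k.2) :
    ∑' k₁ : ℤ, hitE μ k₁ * (ENNReal.ofReal x) ^ k₁ ≤ ENNReal.ofReal y := by
  set X := ENNReal.ofReal x with hXdef
  set Y := ENNReal.ofReal y with hYdef
  have hX0 : X ≠ 0 := by simp [hXdef, hx]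
  have hXt : X ≠ ⊤ := ENNReal.ofReal_ne_top
  have hY0 : Y ≠ 0 := by simp [hYdef, hy]
  have hYt : Y ≠ ⊤ := ENNReal.ofReal_ne_top
  set h : ℤ × ℤ → ℝ≥0∞ := fun l => X ^ l.1 * Y ^ l.2 with hhdef
  -- generating function bound
  have hG : ∑' m : ℤ × ℤ, muE μ m * h m ≤ 1 := by
    have he : ∀ m : ℤ × ℤ, ENNReal.ofReal (μ m * x ^ m.1 * y ^ m.2) = muE μ m * h m := by
      intro m
      rw [ENNReal.ofReal_mul (mul_nonneg (hnn m) (zpow_nonneg hx.le _)),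
        ENNReal.ofReal_mul (hnn m), ofReal_zpow' hx, ofReal_zpow' hy]
      simp [muE, hhdef, mul_assoc]
      rfl
    calc ∑' m : ℤ × ℤ, muE μ m * h m
        = ENNReal.ofReal (genG μ x y) := by
          rw [genG, ENNReal.ofReal_tsum_of_nonneg
            (fun m => mul_nonneg (mul_nonneg (hnn m) (zpow_nonneg hx.le _)) (zpow_nonneg hy.le _)) hs]
          exact (tsum_congr he).symm
      _ ≤ 1 := by simpa using ENNReal.ofReal_le_ofReal hg
  have hmul : ∀ l m : ℤ × ℤ, h (l + m) = h l * h m := by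
    intro l m
    simp only [hhdef, Prod.fst_add, Prod.snd_add, ENNReal.zpow_add hX0 hXt,
      ENNReal.zpow_add hY0 hYt]
    ring
  -- full one-step sum
  have hfull : ∀ l : ℤ × ℤ, ∑' k : ℤ × ℤ, muE μ (k - l) * h k ≤ h l := by
    intro l
    have : ∑' k : ℤ × ℤ, muE μ (k - l) * h k = ∑' m : ℤ × ℤ, muE μ m * h (l + m) := by
      rw [← (Equiv.addLeft l).tsum_eq (fun k => muE μ (k - l) * h k)]
      apply tsum_congr; intro m
      simp [Equiv.addLeft]
    rw [this]
    calc ∑' m : ℤ × ℤ, muE μ m * h (l + m)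
        = h l * ∑' m : ℤ × ℤ, muE μ m * h m := by
          rw [← ENNReal.tsum_mul_left]
          apply tsum_congr; intro m
          rw [hmul l m]; ring
      _ ≤ h l * 1 := mul_le_mul_right hG _
      _ = h l := mul_one _
  -- split into killed + axis parts
  set killedS : ℤ × ℤ → ℝ≥0∞ := fun l => ∑' k : ℤ × ℤ, KE μ l k * h k with hkSdef
  set axisS : ℤ × ℤ → ℝ≥0∞ := fun l => ∑' k₁ : ℤ, muE μ ((k₁, 0) - l) * X ^ k₁ with haSdef
  have hsplit : ∀ l, killedS l + axisS l ≤ h l := by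
    intro l
    have hKE : ∀ k : ℤ × ℤ, KE μ l k * h k
        = if k.2 = 0 then 0 else muE μ (k - l) * h k := by
      intro k
      simp only [KE, axisKillK, muE, apply_ite ENNReal.ofReal, ENNReal.ofReal_zero]
      split <;> simp
    have haxis : axisS l = ∑' k : ℤ × ℤ, (if k.2 = 0 then muE μ (k - l) * h k else 0) := by
      show (∑' k₁ : ℤ, muE μ ((k₁, 0) - l) * X ^ k₁) = _
      rw [ENNReal.tsum_prod (f := fun a b => if b = 0 then muE μ ((a, b) - l) * h (a, b) else 0)]
      apply tsum_congr; intro a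
      have : ∀ b : ℤ, (if b = 0 then muE μ ((a, b) - l) * h (a, b) else 0)
          = if b = (0:ℤ) then muE μ ((a, 0) - l) * h (a, 0) else 0 := by
        intro b; split
        · subst ‹b = 0›; rfl
        · rfl
      rw [tsum_congr this, tsum_ite_eq]
      simp [hhdef]
    have hdecomp : ∑' k : ℤ × ℤ, muE μ (k - l) * h k
        = killedS l + axisS l := by
      show _ = (∑' k : ℤ × ℤ, KE μ l k * h k) + axisS l
      rw [haxis, ← ENNReal.tsum_add]
      apply tsum_congr; intro k
      rw [hKE k]
      split <;> simp
    rw [← hdecomp]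
    exact hfull l
  -- iterates
  set u : ℕ → ℤ × ℤ → ℝ≥0∞ := fun n l => iterE (KE μ) n ((0:ℤ),(1:ℤ)) l with hudef
  set V : ℕ → ℝ≥0∞ := fun n => ∑' l, u n l * h l with hVdef
  set A : ℕ → ℝ≥0∞ := fun n => ∑' l, u n l * axisS l with hAdef
  have hV0 : V 0 = Y := by
    show ∑' l, u 0 l * h l = Y
    have : ∀ l : ℤ × ℤ, u 0 l * h l = if l = ((0:ℤ),(1:ℤ)) then h ((0:ℤ),(1:ℤ)) else 0 := by
      intro l
      simp only [hudef, iterE]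
      by_cases hl : ((0:ℤ),(1:ℤ)) = l
      · subst hl; simp
      · rw [if_neg hl, if_neg (Ne.symm hl), zero_mul]
    rw [tsum_congr this, tsum_ite_eq]
    simp [hhdef]
  have hVstep : ∀ n, V (n + 1) + A n ≤ V n := by
    intro n
    have hV1 : V (n + 1) = ∑' l, u n l * killedS l := by
      simp only [hVdef, hudef, iterE]
      calc ∑' k, (∑' l, iterE (KE μ) n ((0:ℤ),(1:ℤ)) l * KE μ l k) * h k
          = ∑' k, ∑' l, iterE (KE μ) n ((0:ℤ),(1:ℤ)) l * (KE μ l k * h k) := by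
            apply tsum_congr; intro k
            rw [← ENNReal.tsum_mul_right]
            exact tsum_congr fun l => mul_assoc _ _ _
        _ = ∑' l, ∑' k, iterE (KE μ) n ((0:ℤ),(1:ℤ)) l * (KE μ l k * h k) := ENNReal.tsum_comm
        _ = ∑' l, iterE (KE μ) n ((0:ℤ),(1:ℤ)) l * killedS l := by
            exact tsum_congr fun l => ENNReal.tsum_mul_left
    rw [hV1]
    show (∑' l, u n l * killedS l) + (∑' l, u n l * axisS l) ≤ V n
    calc (∑' l, u n l * killedS l) + ∑' l, u n l * axisS l
        = ∑' l, u n l * (killedS l + axisS l) := by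
          rw [← ENNReal.tsum_add]
          exact tsum_congr fun l => (mul_add _ _ _).symm
      _ ≤ ∑' l, u n l * h l := ENNReal.tsum_le_tsum fun l => mul_le_mul_right (hsplit l) _
      _ = V n := rfl
  have htel : ∀ N, (∑ n ∈ Finset.range N, A n) + V N ≤ Y := by
    intro N
    induction N with
    | zero => simp [hV0]
    | succ N ih =>
        rw [Finset.sum_range_succ]
        calc (∑ n ∈ Finset.range N, A n) + A N + V (N + 1)
            = (∑ n ∈ Finset.range N, A n) + (V (N + 1) + A N) := by ring
          _ ≤ (∑ n ∈ Finset.range N, A n) + V N := add_le_add_right (hVstep N) _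
          _ ≤ Y := ih
  have htsumA : ∑' n, A n ≤ Y :=
    ENNReal.tsum_le_of_sum_range_le fun N => le_trans le_self_add (htel N)
  -- identify ∑' A with the hitE sum
  have hAeq : ∀ n, A n = ∑' k₁ : ℤ,
      (∑' l, u n l * muE μ ((k₁, 0) - l)) * X ^ k₁ := by
    intro n
    calc A n = ∑' l, ∑' k₁ : ℤ, u n l * (muE μ ((k₁, 0) - l) * X ^ k₁) := by
          show (∑' l, u n l * axisS l) = _
          exact tsum_congr fun l => ENNReal.tsum_mul_left.symm
      _ = ∑' k₁ : ℤ, ∑' l, u n l * (muE μ ((k₁, 0) - l) * X ^ k₁) := ENNReal.tsum_comm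
      _ = ∑' k₁ : ℤ, (∑' l, u n l * muE μ ((k₁, 0) - l)) * X ^ k₁ := by
          apply tsum_congr; intro k₁
          rw [← ENNReal.tsum_mul_right]
          exact tsum_congr fun l => (mul_assoc _ _ _).symm
  have hfinal : ∑' k₁ : ℤ, hitE μ k₁ * X ^ k₁ = ∑' n, A n := by
    calc ∑' k₁ : ℤ, hitE μ k₁ * X ^ k₁
        = ∑' k₁ : ℤ, ∑' n : ℕ, (∑' l, u n l * muE μ ((k₁, 0) - l)) * X ^ k₁ := by
          apply tsum_congr; intro k₁
          rw [hitE, ENNReal.tsum_mul_right]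
      _ = ∑' n : ℕ, ∑' k₁ : ℤ, (∑' l, u n l * muE μ ((k₁, 0) - l)) * X ^ k₁ := ENNReal.tsum_comm
      _ = ∑' n, A n := tsum_congr fun n => (hAeq n).symm
  rw [hfinal]
  exact htsumA

end Master

section Positivity

lemma list_sum_neg_one (l : List (ℤ × ℤ)) (h : ∀ s ∈ l, s.2 = -1) :
    (l.map Prod.snd).sum = -(l.length : ℤ) := by
  induction l with
  | nil => simp
  | cons a t ih =>
      simp only [List.map_cons, List.sum_cons, List.length_cons, h a (by simp)]
      rw [ih (fun v hv => h v (by simp [hv]))]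
      push_cast
      ring

lemma snd_list_sum (l : List (ℤ × ℤ)) : l.sum.2 = (l.map Prod.snd).sum := by
  induction l with
  | nil => simp
  | cons a t ih => simp [ih]

lemma iterK_nonneg {S : Type*} [DecidableEq S] {p : S → S → ℝ}
    (hp : ∀ j k, 0 ≤ p j k) : ∀ n (j k : S), 0 ≤ iterK p n j k := by
  intro n
  induction n with
  | zero => intro j k; simp only [iterK]; split <;> norm_num
  | succ n ih =>
      intro j k
      simp only [iterK]
      exact tsum_nonneg fun l => mul_nonneg (ih j l) (hp l k)

lemma steps_of_pos {μ : ℤ × ℤ → ℝ} (hnn : ∀ k, 0 ≤ μ k) :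
    ∀ n (j k : ℤ × ℤ), 0 < iterK (homK μ) n j k →
      ∃ L : List (ℤ × ℤ), L.length = n ∧ (∀ s ∈ L, 0 < μ s) ∧ L.sum = k - j := by
  have hhK : ∀ j k : ℤ × ℤ, 0 ≤ homK μ j k := fun j k => hnn _
  intro n
  induction n with
  | zero =>
      intro j k h
      simp only [iterK] at h
      by_cases hjk : j = k
      · exact ⟨[], rfl, by simp, by simp [hjk]⟩
      · rw [if_neg hjk] at h; norm_num at h
  | succ n ih =>
      intro j k h
      simp only [iterK] at h
      have hex : ∃ l, 0 < iterK (homK μ) n j l * homK μ l k := by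
        by_contra hc
        push_neg at hc
        have hz : ∀ l, iterK (homK μ) n j l * homK μ l k = 0 := fun l =>
          le_antisymm (hc l) (mul_nonneg (iterK_nonneg hhK n j l) (hhK l k))
        rw [tsum_congr hz, tsum_zero] at h
        exact lt_irrefl 0 h
      obtain ⟨l, hl⟩ := hex
      rcases mul_pos_iff.mp hl with ⟨h1, h2⟩ | ⟨h1, h2⟩
      · obtain ⟨L, hlen, hpos, hsum⟩ := ih j l h1
        refine ⟨L ++ [k - l], by simp [hlen], ?_, ?_⟩
        · intro s hs
          rcases List.mem_append.mp hs with hs | hs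
          · exact hpos s hs
          · simp only [List.mem_singleton] at hs
            subst hs; exact h2
        · rw [List.sum_append, hsum]
          simp [sub_add_sub_cancel']
      · exact absurd h2 (not_lt.mpr (hhK l k))

lemma hitE_pos {μ : ℤ × ℤ → ℝ} (hnn : ∀ k, 0 ≤ μ k)
    (hsupp : ∀ k : ℤ × ℤ, k.2 < -1 → μ k = 0)
    (hirr : ∀ j k : ℤ × ℤ, ∃ n, 0 < iterK (homK μ) n j k) (k₁ : ℤ) :
    0 < hitE μ k₁ := by
  obtain ⟨n, hn⟩ := hirr ((0:ℤ),(1:ℤ)) ((k₁, 0) : ℤ × ℤ)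
  obtain ⟨L, _, hLpos, hLsum⟩ := steps_of_pos hnn n _ _ hn
  have hLsum' : L.sum = (k₁, -1) := by
    rw [hLsum]; ext <;> simp
  -- reorder: nonnegative-second-coordinate steps first
  set p : ℤ × ℤ → Bool := fun s => decide (0 ≤ s.2) with hpdef
  set a : List (ℤ × ℤ) := L.filter p with hadef
  set b : List (ℤ × ℤ) := L.filter (fun s => !p s) with hbdef
  set M : List (ℤ × ℤ) := a ++ b with hMdef
  have hperm : M.Perm L := List.filter_append_perm p L
  have hMpos : ∀ s ∈ M, 0 < μ s := fun s hs => hLpos s (hperm.subset hs)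
  have hMsum : M.sum = (k₁, -1) := hperm.sum_eq.trans hLsum'
  have hge : ∀ s ∈ M, -1 ≤ s.2 := by
    intro s hs
    by_contra hc
    exact absurd (hsupp s (by omega)) (ne_of_gt (hMpos s hs))
  have hA : ∀ s ∈ a, 0 ≤ s.2 := by
    intro s hs
    have := List.mem_filter.mp hs
    simpa [hpdef] using this.2
  have hB : ∀ s ∈ b, s.2 = -1 := by
    intro s hs
    have h2 := List.mem_filter.mp hs
    have hneg : ¬ (0 ≤ s.2) := by simpa [hpdef] using h2.2
    have hge' : -1 ≤ s.2 := hge s (by rw [hMdef]; exact List.mem_append_right _ hs)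
    omega
  set m := M.length with hmdef
  -- sums of second coordinates
  have hSb : (b.map Prod.snd).sum = -(b.length : ℤ) := list_sum_neg_one b hB
  have hSab : (a.map Prod.snd).sum + (b.map Prod.snd).sum = -1 := by
    have := snd_list_sum M
    rw [hMsum] at this
    simp only [hMdef, List.map_append, List.sum_append] at this ⊢
    linarith [this.symm]
  have hSa : (a.map Prod.snd).sum = (b.length : ℤ) - 1 := by
    rw [hSb] at hSab; linarith
  -- positions along the reordered path
  set pos : ℕ → ℤ × ℤ := fun i => ((0:ℤ),(1:ℤ)) + (M.take i).sum with hposdef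
  have hheight : ∀ i, i < m → 0 < (pos i).2 := by
    intro i hi
    have hsplit2 : (M.take i) = a.take i ++ b.take (i - a.length) := by
      rw [hMdef]; exact List.take_append
    have h2 : (pos i).2 = 1 + ((M.take i).map Prod.snd).sum := by
      simp [hposdef, snd_list_sum]
    rw [h2, hsplit2, List.map_append, List.sum_append]
    by_cases hc : i ≤ a.length
    · have hb0 : i - a.length = 0 := by omega
      rw [hb0]
      simp only [List.take_zero, List.map_nil, List.sum_nil, add_zero]
      have : 0 ≤ ((a.take i).map Prod.snd).sum := by
        apply List.sum_nonneg
        intro v hv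
        obtain ⟨s, hs, rfl⟩ := List.mem_map.mp hv
        exact hA s (List.mem_of_mem_take hs)
      linarith
    · push_neg at hc
      have hta : a.take i = a := List.take_of_length_le (by omega)
      have hlb : (b.take (i - a.length)).length = i - a.length := by
        rw [List.length_take]
        have : m = a.length + b.length := by simp [hmdef, hMdef]
        omega
      have hSbt : ((b.take (i - a.length)).map Prod.snd).sum = -((i - a.length : ℕ) : ℤ) := by
        rw [list_sum_neg_one _ (fun s hs => hB s (List.mem_of_mem_take hs)), hlb]
      rw [hta, hSa, hSbt]
      have hm' : m = a.length + b.length := by simp [hmdef, hMdef]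
      have : (i : ℤ) - a.length ≤ (b.length : ℤ) - 1 := by
        have : i < a.length + b.length := by omega
        omega
      omega
  have hm1 : 1 ≤ m := by
    rcases Nat.eq_zero_or_pos m with h0 | h1
    · exfalso
      have : M = [] := List.length_eq_zero_iff.mp h0
      rw [this] at hMsum
      simp at hMsum
      have := congrArg Prod.snd hMsum
      norm_num at this
    · exact h1
  have hposm : pos m = (k₁, 0) := by
    simp only [hposdef]
    rw [List.take_of_length_le (by rw [hmdef]), hMsum]
    ext <;> simp
  have hstep : ∀ i (hi : i < m), pos (i + 1) = pos i + M[i]'(by omega) := by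
    intro i hi
    simp only [hposdef]
    rw [List.take_succ, List.getElem?_eq_getElem (by omega : i < M.length),
      Option.toList_some, List.sum_append, List.sum_cons, List.sum_nil, add_zero, add_assoc]
  have hMi : ∀ i (hi : i < m), 0 < μ (M[i]'(by omega)) := fun i hi =>
    hMpos _ (List.getElem_mem _)
  -- chain of positive killed-kernel iterates
  have hchain : ∀ i, i < m → 0 < iterE (KE μ) i ((0:ℤ),(1:ℤ)) (pos i) := by
    intro i
    induction i with
    | zero =>
        intro _
        have : pos 0 = ((0:ℤ),(1:ℤ)) := by simp [hposdef]
        rw [this]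
        simp [iterE]
    | succ i ih =>
        intro hi
        have hi' : i < m := by omega
        have hKEpos : 0 < KE μ (pos i) (pos (i + 1)) := by
          have hne : (pos (i + 1)).2 ≠ 0 := ne_of_gt (hheight (i + 1) hi)
          have hdiff : pos (i + 1) - pos i = M[i]'(by omega) := by
            rw [hstep i hi']; ring
          simp only [KE, axisKillK, if_neg hne, hdiff]
          exact ENNReal.ofReal_pos.mpr (hMi i hi')
        calc (0:ℝ≥0∞) < iterE (KE μ) i ((0:ℤ),(1:ℤ)) (pos i) * KE μ (pos i) (pos (i + 1)) :=
              ENNReal.mul_pos (ih hi').ne' hKEpos.ne'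
          _ ≤ ∑' l, iterE (KE μ) i ((0:ℤ),(1:ℤ)) l * KE μ l (pos (i + 1)) :=
              ENNReal.le_tsum (pos i)
          _ = iterE (KE μ) (i + 1) ((0:ℤ),(1:ℤ)) (pos (i + 1)) := rfl
  -- conclude
  have hm1' : m - 1 < m := by omega
  have hlast : muE μ ((k₁, 0) - pos (m - 1)) = ENNReal.ofReal (μ (M[m-1]'(by omega))) := by
    have := hstep (m - 1) hm1'
    rw [show m - 1 + 1 = m by omega] at this
    rw [← hposm, this]
    simp [muE]
  calc (0:ℝ≥0∞)
      < iterE (KE μ) (m-1) ((0:ℤ),(1:ℤ)) (pos (m-1)) * muE μ ((k₁, 0) - pos (m-1)) := by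
        rw [hlast]
        exact ENNReal.mul_pos (hchain (m-1) hm1').ne' (ENNReal.ofReal_pos.mpr (hMi (m-1) hm1')).ne'
    _ ≤ ∑' l, iterE (KE μ) (m-1) ((0:ℤ),(1:ℤ)) l * muE μ ((k₁, 0) - l) :=
        ENNReal.le_tsum (pos (m-1))
    _ ≤ hitE μ k₁ := ENNReal.le_tsum (m-1)

end Positivity

section Convexity

lemma strictConvexOn_tsum_zpow (c : ℤ → ℝ) (hc : ∀ k, 0 < c k) (s : Set ℝ)
    (hs : s ⊆ Set.Ioi 0) (hco : Convex ℝ s)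
    (hsum : ∀ x ∈ s, Summable fun k : ℤ => c k * x ^ k) :
    StrictConvexOn ℝ s (fun x => ∑' k : ℤ, c k * x ^ k) := by
  refine ⟨hco, ?_⟩
  intro x hx y hy hxy a b ha hb hab
  have hzmem : a • x + b • y ∈ s := hco hx hy ha.le hb.le hab
  have hx0 : (0:ℝ) < x := hs hx
  have hy0 : (0:ℝ) < y := hs hy
  set g : ℝ → ℤ → ℝ := fun w k => if k = 2 then 0 else c k * w ^ k with hgdef
  have hgsum : ∀ w ∈ s, Summable (g w) := by
    intro w hw
    apply Summable.of_nonneg_of_le _ _ (hsum w hw)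
    · intro k
      simp only [hgdef]
      split
      · exact le_rfl
      · exact mul_nonneg (hc k).le (zpow_nonneg (hs hw).le k)
    · intro k
      simp only [hgdef]
      split
      · exact mul_nonneg (hc k).le (zpow_nonneg (hs hw).le k)
      · exact le_rfl
  have hsplit : ∀ w ∈ s, (∑' k : ℤ, c k * w ^ k) = c 2 * w ^ (2:ℤ) + ∑' k, g w k :=
    fun w hw => Summable.tsum_eq_add_tsum_ite (hsum w hw) 2
  have hgconv : ∀ k, g (a • x + b • y) k ≤ a * g x k + b * g y k := by
    intro k
    by_cases hk : k = 2
    · subst hk; simp [hgdef]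
    · simp only [hgdef, if_neg hk]
      have hzp := (convexOn_zpow k).2 (hs hx) (hs hy) ha.le hb.le hab
      simp only [smul_eq_mul] at hzp ⊢
      calc c k * (a * x + b * y) ^ k ≤ c k * (a * x ^ k + b * y ^ k) :=
            mul_le_mul_of_nonneg_left hzp (hc k).le
        _ = a * (c k * x ^ k) + b * (c k * y ^ k) := by ring
  have htsum_g : (∑' k, g (a • x + b • y) k) ≤ a * (∑' k, g x k) + b * (∑' k, g y k) := by
    have hR : Summable (fun k => a * g x k + b * g y k) :=
      ((hgsum x hx).mul_left a).add ((hgsum y hy).mul_left b)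
    calc (∑' k, g (a • x + b • y) k) ≤ ∑' k, (a * g x k + b * g y k) :=
          Summable.tsum_le_tsum hgconv (hgsum _ hzmem) hR
      _ = a * (∑' k, g x k) + b * (∑' k, g y k) := by
          rw [Summable.tsum_add ((hgsum x hx).mul_left a) ((hgsum y hy).mul_left b),
            tsum_mul_left, tsum_mul_left]
  have h2 : ∀ w : ℝ, w ^ (2:ℤ) = w * w := by
    intro w
    rw [show (2:ℤ) = ((2:ℕ):ℤ) by norm_num, zpow_natCast]
    ring
  have hstrict : c 2 * (a • x + b • y) ^ (2:ℤ)
      < a * (c 2 * x ^ (2:ℤ)) + b * (c 2 * y ^ (2:ℤ)) := by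
    simp only [smul_eq_mul, h2]
    have hxy2 : 0 < (x - y) ^ 2 := by
      have := sub_ne_zero.mpr hxy
      positivity
    have hbb : b = 1 - a := by linarith
    subst hbb
    nlinarith [mul_pos (hc 2) (mul_pos (mul_pos ha hb) hxy2)]
  simp only [smul_eq_mul] at hzmem ⊢
  rw [show (∑' k : ℤ, c k * (a * x + b * y) ^ k)
      = c 2 * (a * x + b * y) ^ (2:ℤ) + ∑' k, g (a * x + b * y) k by
        simpa [smul_eq_mul] using hsplit _ hzmem,
    hsplit x hx, hsplit y hy]
  have := add_lt_add_of_lt_of_le (by simpa [smul_eq_mul] using hstrict)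
    (by simpa [smul_eq_mul] using htsum_g)
  calc c 2 * (a * x + b * y) ^ (2:ℤ) + ∑' k, g (a * x + b * y) k
      < (a * (c 2 * x ^ (2:ℤ)) + b * (c 2 * y ^ (2:ℤ)))
        + (a * (∑' k, g x k) + b * (∑' k, g y k)) := this
    _ = a * (c 2 * x ^ (2:ℤ) + ∑' k, g x k) + b * (c 2 * y ^ (2:ℤ) + ∑' k, g y k) := by ring

end Convexity


/-- All Laurent coefficients `P_{(0,1)}(S(τ₁)=(k₁,0), τ₁<∞)` of
`Y₁(x) = E_{(0,1)}[x^{S₁(τ₁)} ; τ₁ < ∞]` are strictly positive, and consequently `Y₁`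
is strictly convex on `[x*_P, x**_P]`. -/
theorem Y1_coefficients_positive_and_strictly_convex
    (μ : ℤ × ℤ → ℝ)
    (hnn : ∀ k, 0 ≤ μ k) (hprob : ∑' k : ℤ × ℤ, μ k = 1)
    (hsupp : ∀ k : ℤ × ℤ, k.2 < -1 → μ k = 0)
    (hirr : ∀ j k : ℤ × ℤ, ∃ n, 0 < iterK (homK μ) n j k)
    (hcpt : IsCompact {q : ℝ × ℝ | 0 < q.1 ∧ 0 < q.2 ∧ genG μ q.1 q.2 ≤ 1})
    (hint : (interior {q : ℝ × ℝ | 0 < q.1 ∧ 0 < q.2 ∧ genG μ q.1 q.2 ≤ 1}).Nonempty)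
    (hfin : ∃ U : Set (ℝ × ℝ), IsOpen U ∧
      {q : ℝ × ℝ | 0 < q.1 ∧ 0 < q.2 ∧ genG μ q.1 q.2 ≤ 1} ⊆ U ∧
      ∀ q ∈ U, Summable (fun k : ℤ × ℤ => μ k * q.1 ^ k.1 * q.2 ^ k.2))
    (xsP xssP : ℝ) (hlt : xsP < xssP)
    (hproj : {x : ℝ | 0 < x ∧ ∃ y : ℝ, 0 < y ∧ genG μ x y ≤ 1} = Set.Icc xsP xssP) :
    (∀ k₁ : ℤ, 0 < hitCoeff μ k₁) ∧
    StrictConvexOn ℝ (Set.Icc xsP xssP) (fun x => ∑' k₁ : ℤ, hitCoeff μ k₁ * x ^ k₁) := by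
  obtain ⟨U, hUopen, hDU, hUsum⟩ := hfin
  have hIccPos : ∀ x ∈ Set.Icc xsP xssP, 0 < x ∧ ∃ y, 0 < y ∧ genG μ x y ≤ 1 := by
    intro x hx
    have : x ∈ {x : ℝ | 0 < x ∧ ∃ y : ℝ, 0 < y ∧ genG μ x y ≤ 1} := by rw [hproj]; exact hx
    exact this
  have key : ∀ x ∈ Set.Icc xsP xssP, 0 < x ∧ ∃ y : ℝ, 0 < y ∧
      (∑' k₁ : ℤ, hitE μ k₁ * (ENNReal.ofReal x) ^ k₁) ≤ ENNReal.ofReal y := by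
    intro x hx
    obtain ⟨hx0, y, hy0, hg⟩ := hIccPos x hx
    have hmem : (x, y) ∈ {q : ℝ × ℝ | 0 < q.1 ∧ 0 < q.2 ∧ genG μ q.1 q.2 ≤ 1} := ⟨hx0, hy0, hg⟩
    exact ⟨hx0, y, hy0, master_bound hnn hx0 hy0 hg (hUsum (x, y) (hDU hmem))⟩
  have hxs : xsP ∈ Set.Icc xsP xssP := ⟨le_rfl, hlt.le⟩
  obtain ⟨hxsP0, y0, hy00, hbound0⟩ := key xsP hxs
  have hfinite : ∀ k₁ : ℤ, hitE μ k₁ ≠ ⊤ := by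
    intro k₁ hc
    have h1 : hitE μ k₁ * (ENNReal.ofReal xsP) ^ k₁ ≤ ENNReal.ofReal y0 :=
      le_trans (ENNReal.le_tsum k₁) hbound0
    have hXk : (ENNReal.ofReal xsP) ^ k₁ ≠ 0 :=
      (ENNReal.zpow_pos (by simp [hxsP0]) ENNReal.ofReal_ne_top k₁).ne'
    rw [hc, ENNReal.top_mul hXk] at h1
    simp at h1
  have hcoeff : ∀ k₁, hitCoeff μ k₁ = (hitE μ k₁).toReal := fun k₁ =>
    hitCoeff_eq_toReal hnn hprob k₁ (hfinite k₁)
  have hpos : ∀ k₁, 0 < hitCoeff μ k₁ := by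
    intro k₁
    rw [hcoeff]
    exact ENNReal.toReal_pos (hitE_pos hnn hsupp hirr k₁).ne' (hfinite k₁)
  refine ⟨hpos, ?_⟩
  apply strictConvexOn_tsum_zpow _ hpos _ ?_ (convex_Icc _ _) ?_
  · intro x hx
    exact Set.mem_Ioi.mpr (hIccPos x hx).1
  · intro x hx
    obtain ⟨hx0, y, hy0, hbound⟩ := key x hx
    have hne : (∑' k₁ : ℤ, hitE μ k₁ * (ENNReal.ofReal x) ^ k₁) ≠ ⊤ :=
      ne_top_of_le_ne_top ENNReal.ofReal_ne_top hbound
    have hsum2 := ENNReal.summable_toReal hne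
    have heq : ∀ k₁ : ℤ, (hitE μ k₁ * (ENNReal.ofReal x) ^ k₁).toReal
        = hitCoeff μ k₁ * x ^ k₁ := by
      intro k₁
      rw [ENNReal.toReal_mul, toReal_zpow' hx0, hcoeff]
    exact (summable_congr heq).mp hsum2
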